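/- Let E be a Banach space and let (𝒜,dom(𝒜)) be a Hille–Yosida operator on the Banach algebra 𝓛(E), i.e., a linear operator for which there exist ω ∈ ℝ and M ≥ 1 with (ω,∞) ⊆ ρ(𝒜) and ‖R(λ,𝒜)ⁿ‖ ≤ M/(λ−ω)ⁿ for all λ > ω and n ∈ ℕ. Assume in addition that λ·R(λ,𝒜)(Id)x → x in E for every x ∈ E as λ → ∞ (as holds when 𝒜 is the generator of a τ_sot-bi-continuous semigroup on 𝓛(E)). Then the following are equivalent: (i) dom(𝒜) is a right ideal of 𝓛(E) and 𝒜 is a right 𝓛(E)-module homomorphism, i.e., for every C ∈ dom(𝒜) and B ∈ 𝓛(E) one has C∘B ∈ dom(𝒜) and 𝒜(C∘B) = 𝒜(C)∘B; (ii) there exists a Hille–Yosida operator (A,dom(A)) on E such that dom(𝒜) = {C ∈ 𝓛(E) : Ran(C) ⊆ dom(A) and A∘C ∈ 𝓛(E)} and 𝒜(C) = A∘C for all C ∈ dom(𝒜). -/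

import Mathlib

open Set Filter Topology

variable {Z : Type*} [NormedAddCommGroup Z] [NormedSpace ℝ Z]

/-- `R` is the resolvent at `λ` of the (possibly unbounded) linear operator `A` with domain `D`:
`λ - A : D → Z` is bijective with bounded inverse `R`. -/
def IsResolventAt (D : Submodule ℝ Z) (A : D →ₗ[ℝ] Z) (lam : ℝ) (R : Z →L[ℝ] Z) : Prop :=
  (∀ z : Z, ∃ h : R z ∈ D, lam • (R z) - A ⟨R z, h⟩ = z) ∧
    ∀ C : D, R (lam • (C : Z) - A C) = (C : Z)

/-- `(A, D)` is a Hille–Yosida operator: there are `ω ∈ ℝ`, `M ≥ 1` with `(ω,∞) ⊆ ρ(A)` and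
`‖R(λ,A)ⁿ‖ ≤ M/(λ-ω)ⁿ` for all `λ > ω`, `n ∈ ℕ`. -/
def IsHilleYosida (D : Submodule ℝ Z) (A : D →ₗ[ℝ] Z) : Prop :=
  ∃ (ω M : ℝ), 1 ≤ M ∧ ∃ R : ℝ → Z →L[ℝ] Z, ∀ lam : ℝ, ω < lam →
    IsResolventAt D A lam (R lam) ∧ ∀ n : ℕ, ‖(R lam) ^ n‖ ≤ M / (lam - ω) ^ n

/-- For a Hille–Yosida operator `(𝒜, dom 𝒜)` on `𝓛(E)` with
`λ R(λ,𝒜)(Id)x → x` for all `x`, the following are equivalent: (i) `dom 𝒜` is a right ideal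
and `𝒜` a right `𝓛(E)`-module homomorphism; (ii) `𝒜` is left multiplication by a Hille–Yosida
operator `(A, dom A)` on `E`, with `dom 𝒜 = {C : Ran C ⊆ dom A, A∘C ∈ 𝓛(E)}`. -/
theorem stmt_4 {E : Type*} [NormedAddCommGroup E] [NormedSpace ℝ E] [CompleteSpace E]
    (D : Submodule ℝ (E →L[ℝ] E)) (A : D →ₗ[ℝ] (E →L[ℝ] E))
    (ω M : ℝ) (hM : 1 ≤ M) (R : ℝ → (E →L[ℝ] E) →L[ℝ] (E →L[ℝ] E))
    (hres : ∀ lam : ℝ, ω < lam → IsResolventAt D A lam (R lam))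
    (hHY : ∀ lam : ℝ, ω < lam → ∀ n : ℕ, ‖(R lam) ^ n‖ ≤ M / (lam - ω) ^ n)
    (happrox : ∀ x : E, Tendsto (fun lam : ℝ => lam • (R lam 1 x)) atTop (nhds x)) :
    (∀ (C : D) (B : E →L[ℝ] E),
        ∃ h : (C : E →L[ℝ] E).comp B ∈ D, A ⟨(C : E →L[ℝ] E).comp B, h⟩ = (A C).comp B) ↔
      (∃ (DA : Submodule ℝ E) (A₀ : DA →ₗ[ℝ] E), IsHilleYosida DA A₀ ∧
        (∀ C : E →L[ℝ] E, C ∈ D ↔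
          ∃ (h : ∀ x : E, C x ∈ DA) (L : E →L[ℝ] E), ∀ x : E, L x = A₀ ⟨C x, h x⟩) ∧
        ∀ (C : D) (h : ∀ x : E, (C : E →L[ℝ] E) x ∈ DA) (x : E),
          (A C) x = A₀ ⟨(C : E →L[ℝ] E) x, h x⟩) := by
  constructor
  · -- (i) → (ii)
    intro hi
    set r : ℝ → E →L[ℝ] E := fun lam => R lam 1 with hrdef
    -- R lam C = (r lam).comp C
    have hcomp : ∀ lam, ω < lam → ∀ C : E →L[ℝ] E, R lam C = (r lam).comp C := by
      intro lam hl C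
      obtain ⟨hQmem, hQeq⟩ := (hres lam hl).1 1
      obtain ⟨hmem, heq⟩ := hi ⟨R lam 1, hQmem⟩ C
      have h2 := (hres lam hl).2 ⟨(R lam 1).comp C, hmem⟩
      have h3 : lam • ((R lam 1).comp C) - A ⟨(R lam 1).comp C, hmem⟩ = C := by
        rw [heq]
        have h4 := congrArg (fun T : E →L[ℝ] E => T.comp C) hQeq
        simpa [ContinuousLinearMap.sub_comp, ContinuousLinearMap.smul_comp,
          ContinuousLinearMap.one_def] using h4
      simpa [h3] using h2
    -- resolvent identity on E
    have hid : ∀ lam μ : ℝ, ω < lam → ω < μ →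
        r μ = r lam + (lam - μ) • (r lam).comp (r μ) := by
      intro lam μ hl hμ
      obtain ⟨hcmem, hceq⟩ := (hres μ hμ).1 1
      have h2 : R lam (lam • (R μ 1) - A ⟨R μ 1, hcmem⟩) = R μ 1 :=
        (hres lam hl).2 ⟨R μ 1, hcmem⟩
      have h3 : lam • (R μ 1) - A ⟨R μ 1, hcmem⟩ =
          (lam - μ) • (R μ 1) + (μ • (R μ 1) - A ⟨R μ 1, hcmem⟩) := by module
      rw [hceq] at h3
      rw [h3] at h2
      have h4 : R lam ((lam - μ) • (R μ 1) + 1) =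
          (lam - μ) • ((r lam).comp (r μ)) + r lam := by
        rw [map_add, map_smul, hcomp lam hl]
      rw [h4] at h2
      have h2' : (lam - μ) • ((r lam).comp (r μ)) + r lam = r μ := h2
      exact h2'.symm.trans (add_comm _ _)
    have hidx : ∀ lam μ : ℝ, ω < lam → ω < μ → ∀ x : E,
        r μ x = r lam x + (lam - μ) • r lam (r μ x) := by
      intro lam μ hl hμ x
      have := congrArg (fun T : E →L[ℝ] E => T x) (hid lam μ hl hμ)
      simpa using this
    set lam0 : ℝ := ω + 1 with hlam0def
    have hl0 : ω < lam0 := by simp [hlam0def]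
    -- injectivity of r lam0
    have hker : ∀ x : E, r lam0 x = 0 → x = 0 := by
      intro x hx
      have hz : ∀ lam : ℝ, ω < lam → r lam x = 0 := by
        intro lam hl
        have := hidx lam lam0 hl hl0 x
        rw [hx] at this
        simpa using this.symm
      have h0 : Tendsto (fun lam : ℝ => lam • (r lam x)) atTop (nhds (0 : E)) := by
        have hev : (fun lam : ℝ => lam • (r lam x)) =ᶠ[atTop] (fun _ => (0 : E)) := by
          filter_upwards [eventually_gt_atTop ω] with lam hlam
          rw [hz lam hlam, smul_zero]
        exact Tendsto.congr' hev.symm tendsto_const_nhds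
      exact (tendsto_nhds_unique (happrox x) h0)
    have hinj : Function.Injective ((r lam0 : E →L[ℝ] E) : E →ₗ[ℝ] E) := by
      intro x y hxy
      have : r lam0 (x - y) = 0 := by
        simp only [map_sub]
        simpa [sub_eq_zero] using hxy
      exact sub_eq_zero.mp (hker _ this)
    set f : E →ₗ[ℝ] E := ((r lam0 : E →L[ℝ] E) : E →ₗ[ℝ] E) with hfdef
    set DA : Submodule ℝ E := LinearMap.range f with hDAdef
    set e : E ≃ₗ[ℝ] DA := LinearEquiv.ofInjective f hinj with hedef
    have hecoe : ∀ x : E, (e x : E) = r lam0 x := fun x =>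
      LinearEquiv.ofInjective_apply f x (h := hinj)
    have hsymm : ∀ d : DA, r lam0 (e.symm d) = (d : E) := by
      intro d
      have := hecoe (e.symm d)
      rw [e.apply_symm_apply] at this
      exact this.symm
    have esymm_eq : ∀ (d : DA) (y : E), r lam0 y = (d : E) → e.symm d = y := by
      intro d y hy
      apply hinj
      show r lam0 (e.symm d) = r lam0 y
      rw [hsymm d, hy]
    set A₀ : DA →ₗ[ℝ] E := lam0 • DA.subtype - e.symm.toLinearMap with hA0def
    have hA0 : ∀ d : DA, A₀ d = lam0 • (d : E) - e.symm d := fun d => rfl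
    -- resolvent property for A₀
    have hresA : ∀ lam, ω < lam → IsResolventAt DA A₀ lam (r lam) := by
      intro lam hl
      constructor
      · intro x
        have hxid : r lam x = r lam0 (x + (lam0 - lam) • r lam x) := by
          have h5 := hidx lam0 lam hl0 hl x
          rw [map_add, map_smul]
          exact h5
        have hmem : r lam x ∈ DA := ⟨x + (lam0 - lam) • r lam x, hxid.symm⟩
        refine ⟨hmem, ?_⟩
        have hsy : e.symm ⟨r lam x, hmem⟩ = x + (lam0 - lam) • r lam x :=
          esymm_eq _ _ hxid.symm
        rw [hA0, hsy]
        show lam • r lam x - (lam0 • (r lam x) - (x + (lam0 - lam) • r lam x)) = x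
        module
      · intro c
        have hc : r lam0 (e.symm c) = (c : E) := hsymm c
        have h1 : lam • (c : E) - A₀ c = (lam - lam0) • (c : E) + e.symm c := by
          rw [hA0]; module
        rw [h1, map_add, map_smul]
        have h2 := hidx lam lam0 hl hl0 (e.symm c)
        rw [hc] at h2
        have h3 : r lam (e.symm c) = (c : E) - (lam - lam0) • r lam (c : E) :=
          eq_sub_of_add_eq h2.symm
        rw [h3]; abel
    -- norm bounds for r
    have hpowc : ∀ lam, ω < lam → ∀ (n : ℕ) (C : E →L[ℝ] E),
        ((R lam) ^ n) C = ((r lam) ^ n).comp C := by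
      intro lam hl n
      induction n with
      | zero => intro C; simp [ContinuousLinearMap.one_def]
      | succ n ih =>
        intro C
        rw [pow_succ]
        have h1 : (((R lam) ^ n) * R lam) C = ((R lam) ^ n) (R lam C) := rfl
        rw [h1, hcomp lam hl C, ih, pow_succ,
          show ((r lam) ^ n) * r lam = ((r lam) ^ n).comp (r lam) from rfl,
          ContinuousLinearMap.comp_assoc]
    have hnorm : ∀ lam, ω < lam → ∀ n : ℕ, ‖(r lam) ^ n‖ ≤ M / (lam - ω) ^ n := by
      intro lam hl n
      have h1 : (r lam) ^ n = ((R lam) ^ n) 1 := by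
        rw [hpowc lam hl n 1]
        simp [ContinuousLinearMap.one_def]
      calc ‖(r lam) ^ n‖ = ‖((R lam) ^ n) 1‖ := by rw [h1]
        _ ≤ ‖(R lam) ^ n‖ * ‖(1 : E →L[ℝ] E)‖ := ContinuousLinearMap.le_opNorm _ _
        _ ≤ ‖(R lam) ^ n‖ * 1 := by
            gcongr
            simpa [ContinuousLinearMap.one_def] using
              (ContinuousLinearMap.norm_id_le : ‖(ContinuousLinearMap.id ℝ E)‖ ≤ 1)
        _ = ‖(R lam) ^ n‖ := mul_one _
        _ ≤ M / (lam - ω) ^ n := hHY lam hl n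
    -- characterization of D
    have hDchar : ∀ C : D, ∀ x : E,
        ∃ h : (C : E →L[ℝ] E) x ∈ DA, A₀ ⟨(C : E →L[ℝ] E) x, h⟩ = (A C) x := by
      intro C x
      have hCrep := (hres lam0 hl0).2 C
      rw [hcomp lam0 hl0] at hCrep
      have hx : r lam0 ((lam0 • (C : E →L[ℝ] E) - A C) x) = (C : E →L[ℝ] E) x := by
        conv_rhs => rw [← hCrep]
        rfl
      have hm : (C : E →L[ℝ] E) x ∈ DA := ⟨_, hx⟩
      refine ⟨hm, ?_⟩
      rw [hA0, esymm_eq ⟨_, hm⟩ _ hx]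
      show lam0 • ((C : E →L[ℝ] E) x) -
          (lam0 • ((C : E →L[ℝ] E) x) - (A C) x) = (A C) x
      abel
    refine ⟨DA, A₀, ⟨ω, M, hM, r, fun lam hl => ⟨hresA lam hl, hnorm lam hl⟩⟩, ?_, ?_⟩
    · intro C
      constructor
      · intro hC
        exact ⟨fun x => (hDchar ⟨C, hC⟩ x).1, A ⟨C, hC⟩,
          fun x => ((hDchar ⟨C, hC⟩ x).2).symm⟩
      · rintro ⟨h, L, hL⟩
        have hkey : ∀ x, r lam0 ((lam0 • C - L) x) = C x := by
          intro x
          have hLx : (lam0 • C - L) x = lam0 • C x - A₀ ⟨C x, h x⟩ := by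
            simp [hL x]
          rw [hLx, hA0]
          rw [show lam0 • C x - (lam0 • C x - e.symm (⟨C x, h x⟩ : DA)) =
            e.symm (⟨C x, h x⟩ : DA) from by abel]
          exact hsymm ⟨C x, h x⟩
        have hCeq : (r lam0).comp (lam0 • C - L) = C := by
          ext x; exact hkey x
        obtain ⟨hmem, -⟩ := (hres lam0 hl0).1 (lam0 • C - L)
        rw [hcomp lam0 hl0, hCeq] at hmem
        exact hmem
    · intro C h x
      exact ((hDchar C x).2).symm
  · -- (ii) → (i)
    rintro ⟨DA, A₀, _, hmemiff, hAval⟩ C B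
    obtain ⟨hC, L, hL⟩ := (hmemiff C).mp C.2
    have hCB : (C : E →L[ℝ] E).comp B ∈ D := by
      rw [hmemiff]
      exact ⟨fun x => hC (B x), L.comp B, fun x => hL (B x)⟩
    refine ⟨hCB, ?_⟩
    ext x
    have h1 := hAval ⟨(C : E →L[ℝ] E).comp B, hCB⟩ (fun x => hC (B x)) x
    have h2 := hAval C hC (B x)
    simp only [ContinuousLinearMap.comp_apply] at h1 h2 ⊢
    rw [h1, h2]
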